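/- Let u, x ∈ Δ have strictly positive entries, g ∈ ℝ^d, and γ, η > 0. The minimizer over Δ of v ↦ γη⟨g, v⟩ + η·KL(v‖x) + KL(v‖u) is given coordinatewise by v_j = x_j^{η/(η+1)} u_j^{1/(η+1)} e^{−γη g_j/(1+η)} / ∑_{ℓ=1}^d x_ℓ^{η/(η+1)} u_ℓ^{1/(η+1)} e^{−γη g_ℓ/(1+η)}. -/
import Mathlib


/-- Probability simplex in ℝ^d. -/
def simplex (d : ℕ) : Set (Fin d → ℝ) :=
  {z | (∀ j, 0 ≤ z j) ∧ ∑ j, z j = 1}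

/-- Kullback–Leibler divergence. -/
noncomputable def KL {d : ℕ} (z u : Fin d → ℝ) : ℝ :=
  ∑ j, z j * Real.log (z j / u j)

/-- Gibbs' inequality. -/
lemma gibbs_nonneg {d : ℕ} (v w : Fin d → ℝ) (hv : ∀ j, 0 ≤ v j) (hw : ∀ j, 0 < w j)
    (hvs : ∑ j, v j = 1) (hws : ∑ j, w j = 1) :
    0 ≤ ∑ j, v j * Real.log (v j / w j) := by
  have key : ∀ j, v j - w j ≤ v j * Real.log (v j / w j) := by
    intro j
    rcases eq_or_lt_of_le (hv j) with h | h
    · simp [← h, (hw j).le]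
    · have h1 : Real.log (w j / v j) ≤ w j / v j - 1 :=
        Real.log_le_sub_one_of_pos (div_pos (hw j) h)
      have h2 : Real.log (v j / w j) = - Real.log (w j / v j) := by
        rw [← Real.log_inv]; congr 1; field_simp
      have h3 : v j * (w j / v j - 1) = w j - v j := by field_simp
      have h4 : v j * Real.log (w j / v j) ≤ w j - v j := by
        calc v j * Real.log (w j / v j) ≤ v j * (w j / v j - 1) :=
              mul_le_mul_of_nonneg_left h1 (hv j)
          _ = w j - v j := h3
      rw [h2]; linarith
  calc (0 : ℝ) = ∑ j, (v j - w j) := by rw [Finset.sum_sub_distrib, hvs, hws]; ring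
    _ ≤ _ := Finset.sum_le_sum fun j _ => key j

/-- Closed-form solution of the composite proximal step with two KL terms:
the minimizer of `v ↦ γη⟨g, v⟩ + η·KL(v‖x) + KL(v‖u)` over the simplex is the
given multiplicative-weights formula. -/
theorem composite_entropic_step {d : ℕ}
    (u x : Fin d → ℝ) (hu : u ∈ simplex d) (hx : x ∈ simplex d)
    (hupos : ∀ j, 0 < u j) (hxpos : ∀ j, 0 < x j)
    (g : Fin d → ℝ) (γ η : ℝ) (hγ : 0 < γ) (hη : 0 < η) :
    let vstar : Fin d → ℝ := fun j =>
      x j ^ (η / (η + 1)) * u j ^ (1 / (η + 1)) *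
          Real.exp (-(γ * η * g j) / (1 + η)) /
        ∑ ℓ, x ℓ ^ (η / (η + 1)) * u ℓ ^ (1 / (η + 1)) *
          Real.exp (-(γ * η * g ℓ) / (1 + η))
    vstar ∈ simplex d ∧
      ∀ v ∈ simplex d,
        γ * η * (∑ j, g j * vstar j) + η * KL vstar x + KL vstar u
          ≤ γ * η * (∑ j, g j * v j) + η * KL v x + KL v u := by
  intro vstar
  set w : Fin d → ℝ := fun j =>
      x j ^ (η / (η + 1)) * u j ^ (1 / (η + 1)) *
        Real.exp (-(γ * η * g j) / (1 + η)) with hwdef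
  have hwpos : ∀ j, 0 < w j := by
    intro j
    have := hxpos j; have := hupos j
    positivity
  have hd : d ≠ 0 := by rintro rfl; simpa using hu.2
  have hne : Nonempty (Fin d) := ⟨⟨0, Nat.pos_of_ne_zero hd⟩⟩
  have hSpos : 0 < ∑ ℓ, w ℓ :=
    Finset.sum_pos (fun ℓ _ => hwpos ℓ) Finset.univ_nonempty
  set S : ℝ := ∑ ℓ, w ℓ with hSdef
  have hvstar : ∀ j, vstar j = w j / S := fun j => rfl
  have hvpos : ∀ j, 0 < vstar j := fun j => by
    rw [hvstar]; exact div_pos (hwpos j) hSpos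
  have hvsum : ∑ j, vstar j = 1 := by
    simp only [hvstar]
    rw [← Finset.sum_div, div_self hSpos.ne']
  have hmem : vstar ∈ simplex d := ⟨fun j => (hvpos j).le, hvsum⟩
  refine ⟨hmem, ?_⟩
  have hη1 : (0:ℝ) < η + 1 := by linarith
  -- log of w j
  have hlogw : ∀ j, Real.log (w j) =
      η / (η + 1) * Real.log (x j) + 1 / (η + 1) * Real.log (u j)
        + -(γ * η * g j) / (1 + η) := by
    intro j
    rw [hwdef]
    have hx' := hxpos j; have hu' := hupos j
    rw [Real.log_mul (by positivity) (by positivity),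
        Real.log_mul (by positivity) (by positivity),
        Real.log_rpow hx', Real.log_rpow hu', Real.log_exp]
  -- key per-point identity: F(v) = (1+η) * D(v, vstar) - (1+η) * log S, for v ∈ simplex
  have keyF : ∀ v ∈ simplex d,
      γ * η * (∑ j, g j * v j) + η * KL v x + KL v u
        = (1 + η) * (∑ j, v j * Real.log (v j / vstar j)) - (1 + η) * Real.log S := by
    intro v hv
    have hterm : ∀ j, γ * η * (g j * v j) + η * (v j * Real.log (v j / x j))
        + v j * Real.log (v j / u j)
        = (1 + η) * (v j * Real.log (v j / vstar j)) - (1 + η) * Real.log S * v j := by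
      intro j
      rcases eq_or_lt_of_le (hv.1 j) with h | h
      · simp [← h]
      · have hx' := hxpos j; have hu' := hupos j
        have hlogv : Real.log (vstar j) = Real.log (w j) - Real.log S := by
          rw [hvstar, Real.log_div (hwpos j).ne' hSpos.ne']
        rw [Real.log_div h.ne' hx'.ne', Real.log_div h.ne' hu'.ne',
            Real.log_div h.ne' (hvpos j).ne', hlogv, hlogw j]
        have hne : η + 1 ≠ 0 := hη1.ne'
        have hne2 : (1 : ℝ) + η ≠ 0 := by linarith
        field_simp
        ring
    calc γ * η * (∑ j, g j * v j) + η * KL v x + KL v u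
        = ∑ j, (γ * η * (g j * v j) + η * (v j * Real.log (v j / x j))
            + v j * Real.log (v j / u j)) := by
          rw [KL, KL, Finset.mul_sum, Finset.mul_sum, Finset.sum_add_distrib, Finset.sum_add_distrib]
      _ = ∑ j, ((1 + η) * (v j * Real.log (v j / vstar j))
            - (1 + η) * Real.log S * v j) := by
          exact Finset.sum_congr rfl fun j _ => hterm j
      _ = (1 + η) * (∑ j, v j * Real.log (v j / vstar j)) - (1 + η) * Real.log S := by
          rw [Finset.sum_sub_distrib, ← Finset.mul_sum, ← Finset.mul_sum, hv.2, mul_one]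
  intro v hv
  rw [keyF v hv, keyF vstar hmem]
  have hD0 : (∑ j, vstar j * Real.log (vstar j / vstar j)) = 0 := by
    apply Finset.sum_eq_zero
    intro j _
    rw [div_self (hvpos j).ne', Real.log_one, mul_zero]
  have hDv : 0 ≤ ∑ j, v j * Real.log (v j / vstar j) :=
    gibbs_nonneg v vstar hv.1 hvpos hv.2 hvsum
  rw [hD0]
  have : (0:ℝ) < 1 + η := by linarith
  nlinarith
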